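/- For a prime p, let h_n^{(1)} denote the coefficient of t^n in ∏_i(1-x_i t)^{-p}, so h_n^{(1)} = Σ_{λ⊢n} C(p,ℓ(λ)) multinomial(ℓ(λ); m_1(λ),…) h_λ. Then for any partition λ, h_{pλ}^{(1)} ≡ (h_λ)^p modulo pΛ, where h_{pλ}^{(1)} = ∏_i h_{pλ_i}^{(1)}. -/

import Mathlib

open MvPolynomial

noncomputable section

/-- The ring of symmetric functions over `ℤ`, presented as the polynomial ring in the
complete homogeneous symmetric functions: variable `n` stands for `h_n` (for `n ≥ 1`). -/
abbrev LambdaZ : Type := MvPolynomial ℕ ℤ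

/-- The generating function `H(t) = 1 + ∑_{n ≥ 1} h_n t^n = ∏_i (1 - x_i t)^{-1}`. -/
def HSeries : PowerSeries LambdaZ :=
  PowerSeries.mk fun n => if n = 0 then 1 else X n

/-- `h_n^{(1)}`: the coefficient of `t^n` in `H(t)^p = ∏_i (1 - x_i t)^{-p}`. -/
def hOne (p n : ℕ) : LambdaZ := PowerSeries.coeff (R := LambdaZ) n (HSeries ^ p)

/-- coefficients ≤ n determine coeff n of powers -/
lemma coeff_pow_congr {R : Type*} [CommRing R] (k n : ℕ) (f g : PowerSeries R)
    (h : ∀ m ≤ n, PowerSeries.coeff (R := R) m f = PowerSeries.coeff (R := R) m g) :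
    PowerSeries.coeff (R := R) n (f ^ k) = PowerSeries.coeff (R := R) n (g ^ k) := by
  rw [PowerSeries.coeff_pow, PowerSeries.coeff_pow]
  refine Finset.sum_congr rfl fun l hl => Finset.prod_congr rfl fun i hi => ?_
  obtain ⟨hsum, hsupp⟩ := Finset.mem_finsuppAntidiag.mp hl
  refine h _ ?_
  calc l i ≤ Finset.sum (Finset.range k) l := by
        by_cases hmem : i ∈ (Finset.range k)
        · exact Finset.single_le_sum (fun _ _ => Nat.zero_le _) hmem
        · simp [Finsupp.notMem_support_iff.mp (fun hc => hmem (hsupp hc))]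
    _ = n := hsum

lemma key (p : ℕ) (hp : p.Prime) (i : ℕ) (hi : 0 < i) :
    MvPolynomial.map (Int.castRingHom (ZMod p)) (hOne p (p * i)) =
      (X i : MvPolynomial ℕ (ZMod p)) ^ p := by
  haveI : Fact p.Prime := ⟨hp⟩
  set φ : LambdaZ →+* MvPolynomial ℕ (ZMod p) := MvPolynomial.map (Int.castRingHom (ZMod p))
  set F : PowerSeries (MvPolynomial ℕ (ZMod p)) := PowerSeries.map φ HSeries with hF
  have hcF : ∀ m, PowerSeries.coeff m F = if m = 0 then 1 else X m := by
    intro m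
    simp only [hF, PowerSeries.coeff_map, HSeries, PowerSeries.coeff_mk]
    split <;> simp [φ]
  have h1 : φ (hOne p (p * i)) = PowerSeries.coeff (p * i) (F ^ p) := by
    rw [hOne, ← PowerSeries.coeff_map, map_pow]
  rw [h1]
  set q : Polynomial (MvPolynomial ℕ (ZMod p)) := PowerSeries.trunc (p * i + 1) F with hq
  have h2 : PowerSeries.coeff (p * i) (F ^ p)
      = PowerSeries.coeff (p * i) ((q : PowerSeries (MvPolynomial ℕ (ZMod p))) ^ p) := by
    apply coeff_pow_congr
    intro m hm
    rw [Polynomial.coeff_coe, hq, PowerSeries.coeff_trunc, if_pos (by omega)]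
  rw [h2, ← Polynomial.coe_pow, Polynomial.coeff_coe,
    ← Polynomial.map_frobenius_expand, Polynomial.coeff_map, Polynomial.coeff_expand_mul' hp.pos,
    hq, PowerSeries.coeff_trunc, if_pos (by nlinarith [hp.two_le]), hcF,
    if_neg hi.ne', frobenius_def]

/-- For any partition `λ`, `h_{pλ}^{(1)} ≡ (h_λ)^p` modulo `pΛ`,
where `h_{pλ}^{(1)} = ∏_i h_{pλ_i}^{(1)}` and `h_λ = ∏_i h_{λ_i}`. -/
theorem hOne_smul_partition_mod_p (p : ℕ) (hp : p.Prime) {k : ℕ} (lam : k.Partition) :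
    MvPolynomial.map (Int.castRingHom (ZMod p))
        ((lam.parts.map fun i => hOne p (p * i)).prod) =
      MvPolynomial.map (Int.castRingHom (ZMod p))
        (((lam.parts.map fun i => (X i : LambdaZ)).prod) ^ p) := by
  rw [map_multiset_prod, map_pow, map_multiset_prod, Multiset.map_map, Multiset.map_map,
    ← Multiset.prod_map_pow]
  exact congrArg Multiset.prod (Multiset.map_congr rfl fun i hi => by
    simpa using key p hp i (lam.parts_pos hi))
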